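/- Let G be a finite abelian group with exponent n and let M > 1 be an integer. If G contains a subgroup isomorphic to Z_n^M, then the number of subgroups of G isomorphic to Z_n^M is at least c_1 · |G| · (number of subgroups of G/C isomorphic to Z_n^{M-1}), where C is any subgroup of G isomorphic to Z_n, and c_1 > 0 is a constant depending only on M and n (one may take c_1 = prod over primes p | n of p^{-M^2 β_p}, where p^{β_p} is the largest power of p dividing n). -/

import Mathlib

open Finset

/-- In `ZMod n`, if every annihilator of `x` annihilates `y`, then `x` divides `y`. -/
lemma zmod_dvd_of_ann {n : ℕ} [NeZero n] (x y : ZMod n)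
    (h : ∀ r : ZMod n, r * x = 0 → r * y = 0) : ∃ c : ZMod n, y = c * x := by
  have hn : n ≠ 0 := NeZero.ne n
  set a : ℕ := x.val with ha
  set b : ℕ := y.val with hb
  have hx : (a : ZMod n) = x := ZMod.natCast_rightInverse x
  have hy : (b : ZMod n) = y := ZMod.natCast_rightInverse y
  set g : ℕ := Nat.gcd a n with hg
  have hga : g ∣ a := Nat.gcd_dvd_left a n
  have hgn : g ∣ n := Nat.gcd_dvd_right a n
  have hg0 : g ≠ 0 := by
    intro h0
    exact hn (Nat.eq_zero_of_zero_dvd (h0 ▸ hgn))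
  have hdvd1 : (n : ℕ) ∣ (n / g) * a := by
    obtain ⟨t, ht⟩ := hga
    refine ⟨t, ?_⟩
    rw [ht, ← mul_assoc, Nat.div_mul_cancel hgn]
  have h1 : ((n / g : ℕ) : ZMod n) * x = 0 := by
    rw [← hx, ← Nat.cast_mul, ZMod.natCast_eq_zero_iff]
    exact hdvd1
  have h2 := h _ h1
  rw [← hy, ← Nat.cast_mul, ZMod.natCast_eq_zero_iff] at h2
  -- n ∣ (n/g) * b  ⇒  g ∣ b
  have hgb : g ∣ b := by
    obtain ⟨t, ht⟩ := h2
    have hng : n = (n / g) * g := (Nat.div_mul_cancel hgn).symm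
    have hpos : 0 < n / g := Nat.div_pos (Nat.le_of_dvd (Nat.pos_of_ne_zero hn) hgn)
      (Nat.pos_of_ne_zero hg0)
    refine ⟨t, ?_⟩
    have : (n / g) * b = (n / g) * (g * t) := by
      rw [ht, ← mul_assoc, Nat.div_mul_cancel hgn]
    exact Nat.eq_of_mul_eq_mul_left hpos this
  -- Bezout:  (g : ZMod n) = x * u
  have hbez : (g : ℤ) = a * Nat.gcdA a n + n * Nat.gcdB a n := Nat.gcd_eq_gcd_ab a n
  have hgZ : (g : ZMod n) = x * ((Nat.gcdA a n : ℤ) : ZMod n) := by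
    have := congrArg (fun z : ℤ => ((z : ZMod n))) hbez
    push_cast at this
    rw [ZMod.natCast_self] at this
    simpa [hx] using this
  obtain ⟨t, ht⟩ := hgb
  refine ⟨((Nat.gcdA a n : ℤ) : ZMod n) * (t : ZMod n), ?_⟩
  rw [← hy, ht]
  push_cast
  rw [hgZ]
  ring

/-- `ZMod n` is self-injective (Baer's criterion form). -/
lemma baer_zmod (n : ℕ) [NeZero n] : Module.Baer (ZMod n) (ZMod n) := by
  haveI : IsPrincipalIdealRing (ZMod n) :=
    IsPrincipalIdealRing.of_surjective (Int.castRingHom (ZMod n)) ZMod.intCast_surjective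
  intro I f
  obtain ⟨x, hx⟩ := (IsPrincipalIdealRing.principal I).principal
  have hxI : x ∈ I := hx ▸ Submodule.mem_span_singleton_self x
  set y : ZMod n := f ⟨x, hxI⟩ with hy
  have hann : ∀ r : ZMod n, r * x = 0 → r * y = 0 := by
    intro r hr
    have h0 : r • (⟨x, hxI⟩ : I) = 0 := by
      apply Subtype.ext
      simpa [smul_eq_mul] using hr
    calc r * y = r • f ⟨x, hxI⟩ := by rw [smul_eq_mul]
      _ = f (r • ⟨x, hxI⟩) := (f.map_smul r _).symm
      _ = 0 := by rw [h0, map_zero]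
  obtain ⟨c, hc⟩ := zmod_dvd_of_ann x y hann
  refine ⟨c • LinearMap.id, ?_⟩
  intro z hz
  have hz' : z ∈ Submodule.span (ZMod n) {x} := hx ▸ hz
  obtain ⟨w, hw⟩ := Submodule.mem_span_singleton.mp hz'
  have hzx : (⟨z, hz⟩ : I) = w • ⟨x, hxI⟩ := by
    apply Subtype.ext
    simpa [smul_eq_mul] using hw.symm
  rw [hzx, f.map_smul, ← hy]
  simp only [LinearMap.smul_apply, LinearMap.id_apply, smul_eq_mul]
  rw [hc, ← hw, smul_eq_mul]
  ring

/-- Transporting the count of subgroups isomorphic to `W` along a group isomorphism. -/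
lemma map_map_symm {A B : Type*} [AddCommGroup A] [AddCommGroup B]
    (φ : A ≃+ B) (K : AddSubgroup A) :
    (K.map (φ : A →+ B)).map (φ.symm : B →+ A) = K := by
  rw [AddSubgroup.map_map]
  have : (φ.symm : B →+ A).comp (φ : A →+ B) = AddMonoidHom.id A := by
    ext a; simp
  rw [this, AddSubgroup.map_id]

lemma card_iso_subgroups {A B W : Type*} [AddCommGroup A] [AddCommGroup B] [AddCommGroup W]
    (ψ : A ≃+ B) :
    Nat.card {K : AddSubgroup A // Nonempty (K ≃+ W)} =
      Nat.card {K : AddSubgroup B // Nonempty (K ≃+ W)} := by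
  refine Nat.card_congr ⟨fun K => ⟨K.1.map (ψ : A →+ B),
      ⟨((ψ.addSubgroupMap K.1).symm.trans (Classical.choice K.2))⟩⟩,
    fun K => ⟨K.1.map (ψ.symm : B →+ A),
      ⟨((ψ.symm.addSubgroupMap K.1).symm.trans (Classical.choice K.2))⟩⟩, ?_, ?_⟩
  · intro K
    exact Subtype.ext (map_map_symm ψ K.1)
  · intro K
    apply Subtype.ext
    simpa using map_map_symm ψ.symm K.1
open Finset
lemma prod_primeFactors_pow_mul (n k : ℕ) (hn : n ≠ 0) :
    ∏ p ∈ n.primeFactors, p ^ (k * n.factorization p) = n ^ k := by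
  have h := Nat.factorization_prod_pow_eq_self hn
  rw [Finsupp.prod, Nat.support_factorization] at h
  calc ∏ p ∈ n.primeFactors, p ^ (k * n.factorization p)
      = ∏ p ∈ n.primeFactors, (p ^ n.factorization p) ^ k := by
        refine Finset.prod_congr rfl fun p _ => ?_
        rw [← pow_mul, mul_comm]
    _ = (∏ p ∈ n.primeFactors, p ^ n.factorization p) ^ k := by
        rw [Finset.prod_pow]
    _ = n ^ k := by rw [h]

def consAddEquiv (m : ℕ) (A : Type*) [AddMonoid A] :
    (A × (Fin m → A)) ≃+ (Fin (m + 1) → A) :=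
  { Fin.consEquiv (fun _ : Fin (m + 1) => A) with
    map_add' := by
      intro x y
      funext i
      refine Fin.cases ?_ (fun j => ?_) i <;>
        simp [Fin.consEquiv, Fin.cons_zero, Fin.cons_succ] }

/-- Core counting estimate: given a retraction character `ρ : G →+ ZMod n` and `c0` with
`ρ c0 = 1`, with `D = ker ρ`, we have
`|D| · #{K ≤ D : K ≅ Z_n^{M'}} ≤ #{H ≤ G : H ≅ Z_n^{M'+1}} · n^{M'+1}`. -/
lemma core_count {G : Type} [AddCommGroup G] [Finite G] {n : ℕ} [NeZero n]
    (hnsmul : ∀ g : G, n • g = 0) (ρ : G →+ ZMod n) (c0 : G) (hρc0 : ρ c0 = 1) (M' : ℕ) :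
    Nat.card ρ.ker *
        Nat.card {K : AddSubgroup ρ.ker // Nonempty (K ≃+ (Fin M' → ZMod n))} ≤
      Nat.card {H : AddSubgroup G // Nonempty (H ≃+ (Fin (M' + 1) → ZMod n))} * n ^ (M' + 1) := by
  classical
  set D := ρ.ker with hDdef
  set W := (Fin M' → ZMod n) with hW
  have hzero : ∀ d : G, (zmultiplesHom G (c0 + d)) (n : ℤ) = 0 := by
    intro d
    simp only [zmultiplesHom_apply, natCast_zsmul]
    exact hnsmul _
  set L : ↥D → (ZMod n →+ G) := fun d =>
    ZMod.lift n ⟨zmultiplesHom G (c0 + ↑d), hzero ↑d⟩ with hLdef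
  have hL : ∀ (d : ↥D) (m : ℤ), L d ((m : ℤ) : ZMod n) = m • (c0 + ↑d) := by
    intro d m
    rw [hLdef, ZMod.lift_coe]
    rfl
  have hρL : ∀ (d : ↥D) (a : ZMod n), ρ (L d a) = a := by
    intro d a
    obtain ⟨m, rfl⟩ := ZMod.intCast_surjective a
    rw [hL, map_zsmul, map_add, hρc0]
    have hd : ρ ↑d = 0 := AddMonoidHom.mem_ker.mp d.2
    rw [hd, add_zero, zsmul_eq_mul, mul_one]
  set φ : ∀ (_ : ↥D) (K : AddSubgroup ↥D), ((ZMod n × ↥K) →+ G) := fun d K =>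
    (L d).coprod (D.subtype.comp K.subtype) with hφdef
  have hφ : ∀ (d : ↥D) (K : AddSubgroup ↥D) (a : ZMod n) (k : ↥K),
      φ d K (a, k) = L d a + ↑↑k := fun d K a k => rfl
  have hρφ : ∀ (d : ↥D) (K : AddSubgroup ↥D) (x : ZMod n × ↥K), ρ (φ d K x) = x.1 := by
    rintro d K ⟨a, k⟩
    rw [hφ, map_add, hρL]
    have hk : ρ ↑↑k = 0 := AddMonoidHom.mem_ker.mp (↑k : ↥D).2
    rw [hk, add_zero]
  have hφinj : ∀ (d : ↥D) (K : AddSubgroup ↥D), Function.Injective (φ d K) := by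
    intro d K
    rw [injective_iff_map_eq_zero]
    rintro ⟨a, k⟩ h0
    have ha : a = 0 := by
      have h1 := hρφ d K (a, k)
      rw [h0, map_zero] at h1
      exact h1.symm
    subst ha
    rw [hφ, map_zero, zero_add] at h0
    have hk : k = 0 := Subtype.ext (Subtype.ext (by simpa using h0))
    simp [hk]
  have hL1 : ∀ d : ↥D, L d (1 : ZMod n) = c0 + ↑d := by
    intro d
    have h := hL d 1
    simpa using h
  have hc0dmem : ∀ (d : ↥D) (K : AddSubgroup ↥D), c0 + ↑d ∈ (φ d K).range := by
    intro d K
    refine ⟨(1, 0), ?_⟩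
    rw [hφ, hL1]
    simp
  have hrange_inf : ∀ (d : ↥D) (K : AddSubgroup ↥D),
      (φ d K).range ⊓ D = K.map D.subtype := by
    intro d K
    ext x
    simp only [AddSubgroup.mem_inf, AddMonoidHom.mem_range, AddSubgroup.mem_map]
    constructor
    · rintro ⟨⟨⟨a, k⟩, rfl⟩, hxD⟩
      have ha : a = 0 := by
        have h1 := hρφ d K (a, k)
        have h2 : ρ (φ d K (a, k)) = 0 := AddMonoidHom.mem_ker.mp hxD
        rw [h1] at h2
        exact h2
      subst ha
      refine ⟨↑k, k.2, ?_⟩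
      rw [hφ, map_zero, zero_add]
      rfl
    · rintro ⟨y, hy, rfl⟩
      refine ⟨⟨(0, ⟨y, hy⟩), ?_⟩, y.2⟩
      rw [hφ, map_zero, zero_add]
      rfl
  set T := {H : AddSubgroup G // Nonempty (H ≃+ (Fin (M' + 1) → ZMod n))} with hT
  set isoH : ∀ (d : ↥D) (K : AddSubgroup ↥D), Nonempty (↥K ≃+ W) →
      ((φ d K).range ≃+ (Fin (M' + 1) → ZMod n)) := fun d K hK =>
    (((AddMonoidHom.ofInjective (hφinj d K)).symm.trans
      (AddEquiv.prodCongr (AddEquiv.refl (ZMod n)) (Classical.choice hK))).trans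
      (consAddEquiv M' (ZMod n))) with hisoH
  set 𝒦 := {K : AddSubgroup ↥D // Nonempty (↥K ≃+ W)} with h𝒦
  set pick : ∀ t : T, (↥t.1 ≃+ (Fin (M' + 1) → ZMod n)) := fun t => Classical.choice t.2
    with hpick
  set Ψ : ↥D × 𝒦 → T × (Fin (M' + 1) → ZMod n) := fun p =>
    (⟨(φ p.1 p.2.1).range, ⟨isoH p.1 p.2.1 p.2.2⟩⟩,
      pick ⟨(φ p.1 p.2.1).range, ⟨isoH p.1 p.2.1 p.2.2⟩⟩ ⟨c0 + ↑p.1, hc0dmem p.1 p.2.1⟩)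
    with hΨ
  have key : ∀ (t t' : T), t = t' → ∀ (a : ↥t.1) (b : ↥t'.1),
      pick t a = pick t' b → (↑a : G) = ↑b := by
    rintro t t' rfl a b hab
    exact congrArg Subtype.val ((pick t).injective hab)
  have hΨinj : Function.Injective Ψ := by
    rintro ⟨d, K⟩ ⟨d', K'⟩ h
    have h1 := congrArg Prod.fst h
    have h2 := congrArg Prod.snd h
    simp only [hΨ] at h1 h2
    have hH : (φ d K.1).range = (φ d' K'.1).range := congrArg Subtype.val h1
    have hd : (↑d : G) = ↑d' := by
      have h3 := key _ _ h1 _ _ h2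
      simpa using h3
    have hdd : d = d' := Subtype.ext hd
    have hKmap : K.1.map D.subtype = K'.1.map D.subtype := by
      rw [← hrange_inf d K.1, ← hrange_inf d' K'.1, hH]
    have hKK : K.1 = K'.1 :=
      AddSubgroup.map_injective D.subtype_injective hKmap
    exact Prod.ext hdd (Subtype.ext hKK)
  haveI : Finite (Set ↥D) := inferInstanceAs (Finite (↥D → Prop))
  haveI : Finite (Set G) := inferInstanceAs (Finite (G → Prop))
  haveI : Finite (AddSubgroup ↥D) := Finite.of_injective _ SetLike.coe_injective
  haveI : Finite (AddSubgroup G) := Finite.of_injective _ SetLike.coe_injective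
  have hcard := Nat.card_le_card_of_injective Ψ hΨinj
  rw [Nat.card_prod, Nat.card_prod] at hcard
  have hpow : Nat.card (Fin (M' + 1) → ZMod n) = n ^ (M' + 1) := by
    rw [Nat.card_pi]
    simp [Nat.card_zmod]
  rwa [hpow] at hcard

open Finset

/-- let `G` be a finite abelian group with exponent `n`, `M > 1`, and suppose
`G` contains a subgroup isomorphic to `Z_n^M`. Then for any subgroup `C ≅ Z_n`, the number
of subgroups of `G` isomorphic to `Z_n^M` is at least
`c_1 · |G| · #{subgroups of G/C isomorphic to Z_n^{M-1}}` with
`c_1⁻¹ = ∏_{p | n} p^{M² β_p}` (where `p^{β_p}` is the largest power of `p` dividing `n`),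
a constant depending only on `M` and `n`. -/
theorem stmt9 (G : Type) [AddCommGroup G] [Finite G] (n M : ℕ) (hM : 1 < M)
    (hexp : AddMonoid.exponent G = n)
    (hex : ∃ H : AddSubgroup G, Nonempty (H ≃+ (Fin M → ZMod n)))
    (C : AddSubgroup G) (hC : Nonempty (C ≃+ ZMod n)) :
    Nat.card G *
        Nat.card {K : AddSubgroup (G ⧸ C) //
          Nonempty (K ≃+ (Fin (M - 1) → ZMod n))} ≤
      (∏ p ∈ n.primeFactors, p ^ (M ^ 2 * n.factorization p)) *
        Nat.card {H : AddSubgroup G // Nonempty (H ≃+ (Fin M → ZMod n))} := by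
  classical
  have hn0 : n ≠ 0 := by
    rw [← hexp]
    exact AddMonoid.exponent_ne_zero_of_finite
  haveI : NeZero n := ⟨hn0⟩
  obtain ⟨M', rfl⟩ : ∃ M', M = M' + 1 := ⟨M - 1, by omega⟩
  have hM' : 1 ≤ M' := by omega
  show Nat.card G *
        Nat.card {K : AddSubgroup (G ⧸ C) // Nonempty (K ≃+ (Fin M' → ZMod n))} ≤ _
  rw [prod_primeFactors_pow_mul n ((M' + 1) ^ 2) hn0]
  obtain ⟨e⟩ := hC
  have hnsmul : ∀ g : G, n • g = 0 := fun g => hexp ▸ AddMonoid.exponent_nsmul_eq_zero g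
  letI : Module (ZMod n) G := AddCommGroup.zmodModule hnsmul
  letI : Module (ZMod n) C := AddCommGroup.zmodModule
    (fun x : C => Subtype.ext (by simpa using hnsmul (x : G)))
  obtain ⟨ρlin, hρ⟩ := (baer_zmod n).injective.out
    (C.subtype.toZModLinearMap n) C.subtype_injective (e.toAddMonoidHom.toZModLinearMap n)
  set ρ : G →+ ZMod n := ρlin.toAddMonoidHom with hρdef
  have hρC : ∀ c : ↥C, ρ ↑c = e c := fun c => hρ c
  set c0 : G := ↑(e.symm 1) with hc0def
  have hρc0 : ρ c0 = 1 := by rw [hc0def, hρC (e.symm 1)]; simp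
  set D : AddSubgroup G := ρ.ker with hDdef
  have hmemD : ∀ g : G, g - ↑(e.symm (ρ g)) ∈ D := by
    intro g
    have : ρ (g - ↑(e.symm (ρ g))) = 0 := by
      rw [map_sub, hρC (e.symm (ρ g))]
      simp
    exact AddMonoidHom.mem_ker.mpr this
  -- |G| = n * |D|
  have cardCD : Nat.card G = n * Nat.card ↥D := by
    have eqv : G ≃ (↥C × ↥D) :=
      { toFun := fun g => (e.symm (ρ g), ⟨g - ↑(e.symm (ρ g)), hmemD g⟩)
        invFun := fun p => ↑p.1 + ↑p.2
        left_inv := fun g => by simp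
        right_inv := by
          rintro ⟨c, d⟩
          have hd : ρ ↑d = 0 := AddMonoidHom.mem_ker.mp d.2
          have h1 : ρ (↑c + ↑d) = e c := by rw [map_add, hρC c, hd, add_zero]
          refine Prod.ext ?_ (Subtype.ext ?_)
          · simp [h1]
          · simp [h1] }
    rw [Nat.card_congr eqv, Nat.card_prod, Nat.card_congr e.toEquiv, Nat.card_zmod]
  -- G ⧸ C ≃+ D
  have hDq : Function.Bijective ((QuotientAddGroup.mk' C).comp D.subtype) := by
    constructor
    · rw [injective_iff_map_eq_zero]
      intro d hd
      have hdC : (↑d : G) ∈ C := by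
        rwa [AddMonoidHom.comp_apply, QuotientAddGroup.mk'_apply,
          QuotientAddGroup.eq_zero_iff] at hd
      have h0 : ρ ↑d = 0 := AddMonoidHom.mem_ker.mp d.2
      have h1 := hρC ⟨↑d, hdC⟩
      rw [h0] at h1
      have h2 : (⟨↑d, hdC⟩ : ↥C) = 0 := e.injective (by simpa using h1.symm)
      have h3 : (↑d : G) = 0 := congrArg Subtype.val h2
      exact Subtype.ext h3
    · intro q
      obtain ⟨g, rfl⟩ := QuotientAddGroup.mk'_surjective C q
      refine ⟨⟨g - ↑(e.symm (ρ g)), hmemD g⟩, ?_⟩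
      have hz : QuotientAddGroup.mk' C ((e.symm (ρ g) : ↥C) : G) = 0 :=
        (QuotientAddGroup.eq_zero_iff _).mpr (e.symm (ρ g)).2
      show QuotientAddGroup.mk' C (g - ↑(e.symm (ρ g))) = QuotientAddGroup.mk' C g
      rw [map_sub, hz, sub_zero]
  have hN' : Nat.card {K : AddSubgroup (G ⧸ C) // Nonempty (K ≃+ (Fin M' → ZMod n))}
      = Nat.card {K : AddSubgroup ↥D // Nonempty (K ≃+ (Fin M' → ZMod n))} :=
    card_iso_subgroups (AddEquiv.ofBijective _ hDq).symm
  have hcore := core_count hnsmul ρ c0 hρc0 M'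
  calc Nat.card G *
        Nat.card {K : AddSubgroup (G ⧸ C) // Nonempty (K ≃+ (Fin M' → ZMod n))}
      = n * (Nat.card ↥D *
          Nat.card {K : AddSubgroup ↥D // Nonempty (K ≃+ (Fin M' → ZMod n))}) := by
        rw [cardCD, hN', mul_assoc]
    _ ≤ n * (Nat.card {H : AddSubgroup G // Nonempty (H ≃+ (Fin (M' + 1) → ZMod n))} *
          n ^ (M' + 1)) := Nat.mul_le_mul_left n hcore
    _ = n ^ (M' + 2) *
          Nat.card {H : AddSubgroup G // Nonempty (H ≃+ (Fin (M' + 1) → ZMod n))} := by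
        ring
    _ ≤ n ^ ((M' + 1) ^ 2) *
          Nat.card {H : AddSubgroup G // Nonempty (H ≃+ (Fin (M' + 1) → ZMod n))} := by
        refine Nat.mul_le_mul_right _ (Nat.pow_le_pow_right (Nat.pos_of_ne_zero hn0) ?_)
        nlinarith
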